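/- In Dijkstra's algorithm with the invariants that δ(u) = d(x,u) for all u in the finalized set Q, that δ(u) ≤ δ(v) for all u ∈ Q and v ∉ Q, and that δ(v) ≤ ℓ(π) for every Q-path π from x to v, the vertex y = argmin over v ∉ Q of δ(v) satisfies δ(y) = d(x,y). -/

import Mathlib

open scoped ENNReal

/-- Weighted length of a walk: sum of the weights of its edges. -/
noncomputable def wlen {V : Type*} {G : SimpleGraph V} (w : Sym2 V → NNReal) {u v : V}
    (p : G.Walk u v) : ℝ≥0∞ :=
  (p.edges.map (fun e => ((w e : NNReal) : ℝ≥0∞))).sum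

/-- Shortest-path distance between two vertices (∞ if no path exists). -/
noncomputable def wdist {V : Type*} (G : SimpleGraph V) (w : Sym2 V → NNReal) (x y : V) : ℝ≥0∞ :=
  ⨅ (p : {p : G.Walk x y // p.IsPath}), wlen w p.1

/-- Distance from a vertex to a cycle: minimum distance to a vertex of the cycle. -/
noncomputable def dcyc {V : Type*} (G : SimpleGraph V) (w : Sym2 V → NNReal) (x : V) {a : V}
    (c : G.Walk a a) : ℝ≥0∞ :=
  ⨅ y ∈ c.support, wdist G w x y

lemma wlen_append {V : Type*} {G : SimpleGraph V} (w : Sym2 V → NNReal) {u v t : V}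
    (p : G.Walk u v) (q : G.Walk v t) :
    wlen w (p.append q) = wlen w p + wlen w q := by
  simp [wlen, SimpleGraph.Walk.edges_append]

/-- under the standard Dijkstra invariants, the vertex y minimizing δ over
V ∖ Q satisfies δ(y) = d(x,y). A Q-path is a simple path from x all of whose vertices except
possibly the last lie in Q. -/
theorem stmt12 {V : Type*} [Fintype V] (G : SimpleGraph V) (w : Sym2 V → NNReal)
    (hw : ∀ e ∈ G.edgeSet, 0 < w e) (x : V) (Q : Set V) (δ : V → ℝ≥0∞)
    (h1 : ∀ u ∈ Q, δ u = wdist G w x u)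
    (h2 : ∀ u ∈ Q, ∀ v ∉ Q, δ u ≤ δ v)
    (h3 : ∀ (v : V) (p : G.Walk x v), p.IsPath →
      (∀ u ∈ p.support.dropLast, u ∈ Q) → δ v ≤ wlen w p)
    (h4 : ∀ v : V, wdist G w x v ≤ δ v)
    (y : V) (hy : y ∉ Q) (hmin : ∀ v ∉ Q, δ y ≤ δ v) :
    δ y = wdist G w x y := by
  classical
  refine le_antisymm ?_ (h4 y)
  rw [wdist]
  refine le_iInf fun ⟨p, hp⟩ => ?_
  suffices H : ∀ n (v : V), v ∉ Q → ∀ p : G.Walk x v, p.IsPath → p.length ≤ n →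
      δ y ≤ wlen w p from H p.length y hy p hp le_rfl
  intro n
  induction n with
  | zero =>
    intro v hv p hp hlen
    have hnil : p.Nil := SimpleGraph.Walk.nil_iff_length_eq.2 (Nat.le_zero.1 hlen)
    have hall : ∀ u ∈ p.support.dropLast, u ∈ Q := by
      cases hnil
      · intro u hu; simp at hu
    exact (hmin v hv).trans (h3 v p hp hall)
  | succ n ih =>
    intro v hv p hp hlen
    by_cases hall : ∀ u ∈ p.support.dropLast, u ∈ Q
    · exact (hmin v hv).trans (h3 v p hp hall)
    · push_neg at hall
      obtain ⟨u, hu, huQ⟩ := hall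
      have hus : u ∈ p.support := List.dropLast_subset _ hu
      have hne : u ≠ v := by
        intro h
        subst h
        have hnd : p.support.Nodup := hp.support_nodup
        have hne' : p.support ≠ [] := p.support_ne_nil
        have heq := List.dropLast_append_getLast hne'
        rw [p.getLast_support] at heq
        rw [← heq] at hnd
        have := (List.nodup_append.1 hnd).2.2
        exact this u hu u (List.mem_singleton_self u) rfl
      set q := p.takeUntil u hus with hq
      set r := p.dropUntil u hus with hr
      have hspec : q.append r = p := p.take_spec hus
      have hrlen : 0 < r.length := by
        rcases Nat.eq_zero_or_pos r.length with h0 | h0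
        · exact absurd (r.eq_of_length_eq_zero h0) hne
        · exact h0
      have hqlen : q.length ≤ n := by
        have : q.length + r.length = p.length := by
          rw [← hspec, SimpleGraph.Walk.length_append]
        omega
      have hqpath : q.IsPath := hp.takeUntil hus
      have h1' : δ y ≤ wlen w q := ih u huQ q hqpath hqlen
      have h2' : wlen w q ≤ wlen w p := by
        rw [← hspec, wlen_append]
        exact le_self_add
      exact h1'.trans h2'
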